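/- arXiv:2111.00034 — 2 statements merged into one kernel-verified Lean document; each statement's English description precedes it below -/
import Mathlib

section
/- Let K₀ : [0,τ]×ℝ^D×ℝ^D → ℝ be continuous with, for each t, K₀(t,·,·) a positive semidefinite kernel; let K∞ be a fixed positive semidefinite kernel whose Gram matrix K∞ ∈ ℝ^{P×P} on the training points x¹,…,x^P is invertible. Suppose the training errors Δ(t) ∈ ℝ^P (with Δ(0) = y − f₀) evolve as Δ'(t) = −ε K₀(t) Δ(t) for t ∈ [0,τ] (K₀(t) the Gram matrix) and Δ'(t) = −h'(t) K∞ Δ(t) for t > τ, where h is C¹, h(τ)=0, h' ≥ 0, h(t) → ∞; and suppose a test prediction f(x,t) evolves as ∂_t f(x,t) = ε k₀(x,t)·Δ(t) for t ≤ τ and ∂_t f(x,t) = h'(t) k∞(x)·Δ(t) for t > τ, where k₀(x,t)^μ = K₀(t,x,x^μ) and k∞(x)^μ = K∞(x,x^μ). Let k₀ := max_{t∈[0,τ]} ‖K₀(t)‖_op and k̃₀ := max_{t∈[0,τ]} ‖k₀(x,t)‖₂. Then the limit f(x,∞) := lim_{t→∞} f(x,t) exists and satisfies |f(x,∞) − f₀(x)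 − k∞(x)ᵀ K∞^{−1} (y − f₀)| ≤ ε τ [ k̃₀ (1 + ε τ k₀) + ‖K∞^{−1} k∞(x)‖₂ k₀ ] ‖y − f₀‖₂; in particular f(x,∞) − f₀(x) = k∞(x)ᵀ K∞^{−1} (y − f₀) + O(ε τ(ε)) as ε → 0 provided ε τ(ε) → 0. -/
open Matrix Filter Set
open scoped Matrix.Norms.L2Operator

/-- The Euclidean (ℓ²) norm of a vector in `ℝ^P`. -/
noncomputable def euclNorm {P : ℕ} (v : Fin P → ℝ) : ℝ :=
  Real.sqrt (∑ i, v i ^ 2)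

lemma euclNorm_eq {P : ℕ} (v : Fin P → ℝ) :
    euclNorm v = ‖(WithLp.equiv 2 (Fin P → ℝ)).symm v‖ := by
  rw [EuclideanSpace.norm_eq]
  simp [euclNorm, Real.norm_eq_abs, sq_abs]

lemma euclNorm_nonneg {P : ℕ} (v : Fin P → ℝ) : 0 ≤ euclNorm v := Real.sqrt_nonneg _

lemma abs_dotProduct_le {P : ℕ} (v w : Fin P → ℝ) :
    |v ⬝ᵥ w| ≤ euclNorm v * euclNorm w := by
  have := abs_real_inner_le_norm ((WithLp.equiv 2 (Fin P → ℝ)).symm v)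
    ((WithLp.equiv 2 (Fin P → ℝ)).symm w)
  rw [euclNorm_eq, euclNorm_eq]
  simpa [PiLp.inner_apply, RCLike.inner_apply, dotProduct, mul_comm] using this

lemma euclNorm_mulVec_le {P : ℕ} (M : Matrix (Fin P) (Fin P) ℝ) (v : Fin P → ℝ) :
    euclNorm (M *ᵥ v) ≤ ‖M‖ * euclNorm v := by
  rw [euclNorm_eq, euclNorm_eq]
  exact M.l2_opNorm_mulVec ((WithLp.equiv 2 (Fin P → ℝ)).symm v)

lemma const_of_deriv_zero (g : ℝ → ℝ) {a b : ℝ} (hab : a ≤ b)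
    (hcont : ContinuousOn g (Set.Icc a b))
    (hd : ∀ s ∈ Set.Ioo a b, HasDerivAt g 0 s) : g b = g a := by
  rcases eq_or_lt_of_le hab with rfl | hab
  · rfl
  obtain ⟨c, hc, hc0⟩ := exists_hasDerivAt_eq_slope g (fun _ => 0) hab hcont hd
  rw [eq_comm, div_eq_iff (sub_ne_zero.2 hab.ne')] at hc0
  linarith

lemma hasDerivAt_dotProduct_const {P : ℕ} (a : Fin P → ℝ) {v : ℝ → Fin P → ℝ}
    {v' : Fin P → ℝ} {s : ℝ} (hv : HasDerivAt v v' s) :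
    HasDerivAt (fun u => a ⬝ᵥ v u) (a ⬝ᵥ v') s := by
  have h1 := hasDerivAt_pi.1 hv
  simpa [dotProduct] using HasDerivAt.fun_sum (fun j (_ : j ∈ Finset.univ) => ((h1 j).const_mul (a j)))

lemma hasDerivAt_mulVec {P : ℕ} {M : ℝ → Matrix (Fin P) (Fin P) ℝ}
    {M' : Matrix (Fin P) (Fin P) ℝ} {v : ℝ → Fin P → ℝ} {v' : Fin P → ℝ} {s : ℝ}
    (hM : ∀ i j, HasDerivAt (fun u => M u i j) (M' i j) s)
    (hv : HasDerivAt v v' s) :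
    HasDerivAt (fun u => M u *ᵥ v u) (M' *ᵥ v s + M s *ᵥ v') s := by
  rw [hasDerivAt_pi]
  intro i
  have h1 := hasDerivAt_pi.1 hv
  have h2 : ∀ j ∈ Finset.univ, HasDerivAt (fun u => M u i j * v u j)
      (M' i j * v s j + M s i j * v' j) s := fun j _ => (hM i j).mul (h1 j)
  simpa [mulVec, dotProduct, Finset.sum_add_distrib] using HasDerivAt.fun_sum h2

noncomputable def ofL2 (P : ℕ) : Matrix (Fin P) (Fin P) ℝ →L[ℝ] (Fin P → Fin P → ℝ) :=
  LinearMap.toContinuousLinearMap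
    (LinearMap.id : Matrix (Fin P) (Fin P) ℝ →ₗ[ℝ] (Fin P → Fin P → ℝ))

lemma hasDerivAt_exp_entry {P : ℕ} (G : Matrix (Fin P) (Fin P) ℝ) {h : ℝ → ℝ} {h' s : ℝ}
    (hh : HasDerivAt h h' s) (i j : Fin P) :
    HasDerivAt (fun u => NormedSpace.exp (h u • G) i j)
      ((h' • (NormedSpace.exp (h s • G) * G)) i j) s := by
  have hM : HasDerivAt (fun u : ℝ => NormedSpace.exp (u • G))
      (NormedSpace.exp (h s • G) * G) (h s) := hasDerivAt_exp_smul_const G (h s)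
  have hcomp : HasDerivAt (fun u => NormedSpace.exp (h u • G))
      (h' • (NormedSpace.exp (h s • G) * G)) s := HasDerivAt.scomp s hM hh
  have h2 := (ofL2 P).hasFDerivAt.comp_hasDerivAt s hcomp
  exact hasDerivAt_pi.1 (hasDerivAt_pi.1 h2 i) j

lemma exp_smul_mulVec_cancel {P : ℕ} (G : Matrix (Fin P) (Fin P) ℝ) (a : ℝ) (v : Fin P → ℝ) :
    NormedSpace.exp ((-a) • G) *ᵥ (NormedSpace.exp (a • G) *ᵥ v) = v := by
  rw [mulVec_mulVec, ← Matrix.exp_add_of_commute _ _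
    (((Commute.refl G).smul_left (-a)).smul_right a)]
  rw [← add_smul, neg_add_cancel, zero_smul, NormedSpace.exp_zero, one_mulVec]

lemma exp_spectral {P : ℕ} {G : Matrix (Fin P) (Fin P) ℝ} (hH : G.IsHermitian) (a : ℝ) :
    NormedSpace.exp (a • G) =
      (hH.eigenvectorUnitary : Matrix (Fin P) (Fin P) ℝ)
        * diagonal (fun k => Real.exp (a * hH.eigenvalues k))
        * star (hH.eigenvectorUnitary : Matrix (Fin P) (Fin P) ℝ) := by
  set U := (hH.eigenvectorUnitary : Matrix (Fin P) (Fin P) ℝ) with hU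
  have hmem := hH.eigenvectorUnitary.2
  rw [Unitary.mem_iff] at hmem
  have hUinv : U⁻¹ = star U := Matrix.inv_eq_left_inv hmem.1
  have hUunit : IsUnit U := ⟨⟨U, star U, hmem.2, hmem.1⟩, rfl⟩
  have h1 : a • G = U * diagonal (fun k => a * hH.eigenvalues k) * U⁻¹ := by
    rw [hUinv]
    conv_lhs => rw [hH.spectral_theorem]
    rw [Unitary.conjStarAlgAut_apply]
    rw [← smul_mul_assoc, ← mul_smul_comm, ← diagonal_smul]
    congr 2
  rw [h1]
  refine (Matrix.exp_conj U _ hUunit).trans ?_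
  rw [Matrix.exp_diagonal, hUinv]
  congr 2
  rw [Pi.exp_def]
  funext k
  rw [← Real.exp_eq_exp_ℝ]

lemma tendsto_exp_entry {P : ℕ} {G : Matrix (Fin P) (Fin P) ℝ} (hG : G.PosSemidef)
    (hdet : IsUnit G.det) {h : ℝ → ℝ} (hhtop : Tendsto h atTop atTop) (i j : Fin P) :
    Tendsto (fun t => NormedSpace.exp (-(h t) • G) i j) atTop (nhds 0) := by
  have hH := hG.1
  have hpos : ∀ k, 0 < hH.eigenvalues k := by
    intro k
    rcases (hG.eigenvalues_nonneg k).lt_or_eq with hk | hk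
    · exact hk
    · exfalso
      apply hdet.ne_zero
      rw [hH.det_eq_prod_eigenvalues]
      exact Finset.prod_eq_zero (Finset.mem_univ k) (by simp [← hk])
  have key : ∀ t, NormedSpace.exp (-(h t) • G) i j =
      ∑ k, (hH.eigenvectorUnitary : Matrix (Fin P) (Fin P) ℝ) i k
        * Real.exp (-(h t) * hH.eigenvalues k)
        * star (hH.eigenvectorUnitary : Matrix (Fin P) (Fin P) ℝ) k j := by
    intro t
    rw [exp_spectral hH]
    rw [Matrix.mul_apply]
    congr 1
    funext k
    rw [Matrix.mul_diagonal]
  simp only [key]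
  have h0 : (0 : ℝ) = ∑ k : Fin P, (hH.eigenvectorUnitary : Matrix (Fin P) (Fin P) ℝ) i k
      * 0 * star (hH.eigenvectorUnitary : Matrix (Fin P) (Fin P) ℝ) k j := by simp
  rw [h0]
  apply tendsto_finset_sum
  intro k _
  have h1 : Tendsto (fun t => Real.exp (-(h t) * hH.eigenvalues k)) atTop (nhds 0) := by
    have h2 : Tendsto (fun t => h t * hH.eigenvalues k) atTop atTop :=
      hhtop.atTop_mul_const' (hpos k)
    have := Real.tendsto_exp_neg_atTop_nhds_zero.comp h2
    simpa [Function.comp_def, neg_mul] using this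
  simpa using (h1.const_mul _).mul_const _

/-- silent alignment theorem: Suppose the training errors evolve with a small
positive semidefinite kernel `ε K₀(t,·,·)` on `[0,τ]` and with a fixed positive semidefinite
kernel `K∞` rescaled by `h'(t)` afterwards (`h` C¹, `h(τ)=0`, `h' ≥ 0`, `h → ∞`), with the
Gram matrix of `K∞` on the training points invertible, and a test prediction `f(x,t)` evolves
accordingly. Then `f(x,t)` converges as `t → ∞` and the limit equals the kernel regression
solution `f₀(x) + k∞(x)ᵀ K∞⁻¹ (y - f₀)` up to the stated `O(ε τ)` error bound. -/
theorem stmt5 {D P : ℕ}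
    (τ ε : ℝ) (hτ : 0 ≤ τ) (hε : 0 < ε)
    (K₀ : ℝ → (Fin D → ℝ) → (Fin D → ℝ) → ℝ)
    (hK₀cont : ContinuousOn (fun p : ℝ × (Fin D → ℝ) × (Fin D → ℝ) => K₀ p.1 p.2.1 p.2.2)
      (Set.Icc 0 τ ×ˢ (Set.univ ×ˢ Set.univ)))
    (hK₀psd : ∀ t ∈ Set.Icc (0 : ℝ) τ, ∀ (m : ℕ) (z : Fin m → Fin D → ℝ),
      Matrix.PosSemidef (Matrix.of fun i j => K₀ t (z i) (z j)))
    (Kinf : (Fin D → ℝ) → (Fin D → ℝ) → ℝ)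
    (hKinfpsd : ∀ (m : ℕ) (z : Fin m → Fin D → ℝ),
      Matrix.PosSemidef (Matrix.of fun i j => Kinf (z i) (z j)))
    (X : Fin P → Fin D → ℝ)
    (Ginf : Matrix (Fin P) (Fin P) ℝ)
    (hGinf : Ginf = Matrix.of fun μ ν => Kinf (X μ) (X ν))
    (hGinv : IsUnit Ginf.det)
    (y f₀ : Fin P → ℝ)
    (Δ : ℝ → Fin P → ℝ) (hΔ0 : Δ 0 = y - f₀)
    (h h' : ℝ → ℝ)
    (hh : ∀ t ≥ τ, HasDerivAt h (h' t) t)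
    (hh'cont : ContinuousOn h' (Set.Ici τ))
    (hhτ : h τ = 0)
    (hh'nonneg : ∀ t ≥ τ, 0 ≤ h' t)
    (hhtop : Tendsto h atTop atTop)
    (hΔ1 : ∀ t ∈ Set.Icc (0 : ℝ) τ,
      HasDerivAt Δ (-(ε • ((Matrix.of fun μ ν => K₀ t (X μ) (X ν)) *ᵥ Δ t))) t)
    (hΔ2 : ∀ t > τ, HasDerivAt Δ (-(h' t • (Ginf *ᵥ Δ t))) t)
    (x : Fin D → ℝ) (f : ℝ → ℝ) (f₀x : ℝ) (hf0 : f 0 = f₀x)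
    (hf1 : ∀ t ∈ Set.Icc (0 : ℝ) τ,
      HasDerivAt f (ε * ((fun μ => K₀ t x (X μ)) ⬝ᵥ Δ t)) t)
    (hf2 : ∀ t > τ, HasDerivAt f (h' t * ((fun μ => Kinf x (X μ)) ⬝ᵥ Δ t)) t)
    (k0max : ℝ)
    (hk0max : IsGreatest
      ((fun t => ‖(Matrix.of fun μ ν => K₀ t (X μ) (X ν) : Matrix (Fin P) (Fin P) ℝ)‖) ''
        Set.Icc (0 : ℝ) τ) k0max)
    (kt0 : ℝ)
    (hkt0 : IsGreatest
      ((fun t => euclNorm fun μ => K₀ t x (X μ)) '' Set.Icc (0 : ℝ) τ) kt0) :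
    ∃ flim : ℝ, Tendsto f atTop (nhds flim) ∧
      |flim - f₀x - (fun μ => Kinf x (X μ)) ⬝ᵥ (Ginf⁻¹ *ᵥ (y - f₀))| ≤
        ε * τ * (kt0 * (1 + ε * τ * k0max)
            + euclNorm (Ginf⁻¹ *ᵥ fun μ => Kinf x (X μ)) * k0max)
          * euclNorm (y - f₀) := by
  have hGpsd : Ginf.PosSemidef := hGinf ▸ hKinfpsd P X
  have hH : Ginf.IsHermitian := hGpsd.1
  -- notation
  set G := Ginf
  set kinf : Fin P → ℝ := fun μ => Kinf x (X μ) with hkinf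
  set av : Fin P → ℝ := G⁻¹ *ᵥ kinf with hav
  -- symmetry of G and of G⁻¹
  have hsym : Gᵀ = G := by
    ext i j
    have := congrFun (congrFun hH i) j
    simpa [conjTranspose_apply] using this
  have hsyminv : G⁻¹ᵀ = G⁻¹ := by rw [transpose_nonsing_inv, hsym]
  have hdot : ∀ w : Fin P → ℝ, kinf ⬝ᵥ (G⁻¹ *ᵥ w) = av ⬝ᵥ w := by
    intro w
    rw [dotProduct_mulVec, hav, ← vecMul_transpose, hsyminv]
  -- Step A: norm of Δ is non-increasing on [0, τ]
  have hΔnorm : ∀ t ∈ Set.Icc (0 : ℝ) τ, euclNorm (Δ t) ≤ euclNorm (Δ 0) := by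
    intro t ht
    rcases eq_or_lt_of_le ht.1 with h0t | h0t
    · rw [← h0t]
    have hNd : ∀ s ∈ Set.Icc (0 : ℝ) τ, HasDerivAt (fun u => ∑ i, Δ u i ^ 2)
        (∑ i, (2 : ℝ) * Δ s i ^ 1 *
          (-(ε • ((Matrix.of fun μ ν => K₀ s (X μ) (X ν)) *ᵥ Δ s))) i) s := by
      intro s hs
      have h1 := hasDerivAt_pi.1 (hΔ1 s hs)
      exact HasDerivAt.fun_sum fun i _ => by simpa using (h1 i).fun_pow 2
    obtain ⟨c, hc, hceq⟩ := exists_hasDerivAt_eq_slope (fun u => ∑ i, Δ u i ^ 2)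
      (fun s => ∑ i, (2 : ℝ) * Δ s i ^ 1 *
        (-(ε • ((Matrix.of fun μ ν => K₀ s (X μ) (X ν)) *ᵥ Δ s))) i) h0t
      (fun s hs => (hNd s ⟨hs.1, hs.2.trans ht.2⟩).continuousAt.continuousWithinAt)
      (fun s hs => hNd s ⟨hs.1.le, hs.2.le.trans ht.2⟩)
    have hcmem : c ∈ Set.Icc (0 : ℝ) τ := ⟨hc.1.le, hc.2.le.trans ht.2⟩
    have hpsd : 0 ≤ Δ c ⬝ᵥ ((Matrix.of fun μ ν => K₀ c (X μ) (X ν)) *ᵥ Δ c) := by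
      simpa using (hK₀psd c hcmem P X).dotProduct_mulVec_nonneg (Δ c)
    have hder_le : (∑ i, (2 : ℝ) * Δ c i ^ 1 *
        (-(ε • ((Matrix.of fun μ ν => K₀ c (X μ) (X ν)) *ᵥ Δ c))) i) ≤ 0 := by
      have heq : (∑ i, (2 : ℝ) * Δ c i ^ 1 *
          (-(ε • ((Matrix.of fun μ ν => K₀ c (X μ) (X ν)) *ᵥ Δ c))) i)
          = -(2 * ε) * (Δ c ⬝ᵥ ((Matrix.of fun μ ν => K₀ c (X μ) (X ν)) *ᵥ Δ c)) := by
        rw [dotProduct, Finset.mul_sum]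
        refine Finset.sum_congr rfl fun i _ => ?_
        simp only [Pi.neg_apply, Pi.smul_apply, smul_eq_mul]
        ring
      rw [heq]
      have : 0 ≤ 2 * ε := by linarith
      nlinarith
    rw [eq_comm, div_eq_iff (by linarith : t - 0 ≠ 0)] at hceq
    have hsum_le : (∑ i, Δ t i ^ 2) ≤ ∑ i, Δ 0 i ^ 2 := by nlinarith
    exact Real.sqrt_le_sqrt hsum_le
  -- nonnegativity facts
  have hkt0n : 0 ≤ kt0 := by
    obtain ⟨s, _, hseq⟩ := hkt0.1
    rw [← hseq]; exact euclNorm_nonneg _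
  have hk0n : 0 ≤ k0max := by
    obtain ⟨s, _, hseq⟩ := hk0max.1
    rw [← hseq]; exact norm_nonneg _
  -- Step B: bound on f τ - f 0
  have hfbound : |f τ - f 0| ≤ ε * (kt0 * euclNorm (Δ 0)) * τ := by
    have hb : ∀ s ∈ Set.Icc (0 : ℝ) τ,
        ‖ε * ((fun μ => K₀ s x (X μ)) ⬝ᵥ Δ s)‖ ≤ ε * (kt0 * euclNorm (Δ 0)) := by
      intro s hs
      rw [Real.norm_eq_abs, abs_mul, abs_of_pos hε]
      refine mul_le_mul_of_nonneg_left ?_ hε.le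
      calc |(fun μ => K₀ s x (X μ)) ⬝ᵥ Δ s|
          ≤ euclNorm (fun μ => K₀ s x (X μ)) * euclNorm (Δ s) := abs_dotProduct_le _ _
        _ ≤ kt0 * euclNorm (Δ 0) :=
            mul_le_mul (hkt0.2 ⟨s, hs, rfl⟩) (hΔnorm s hs) (euclNorm_nonneg _) hkt0n
    have := Convex.norm_image_sub_le_of_norm_hasDerivWithin_le
      (fun s hs => (hf1 s hs).hasDerivWithinAt) hb (convex_Icc 0 τ)
      (Set.left_mem_Icc.2 hτ) (Set.right_mem_Icc.2 hτ)
    simpa [Real.norm_eq_abs, abs_of_nonneg hτ] using this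
  -- Step C: bound on Δ τ - Δ 0
  have hΔdiff : euclNorm (Δ τ - Δ 0) ≤ ε * (k0max * euclNorm (Δ 0)) * τ := by
    set L := (EuclideanSpace.equiv (Fin P) ℝ).symm with hL
    have hder : ∀ s ∈ Set.Icc (0 : ℝ) τ, HasDerivWithinAt (fun u => L (Δ u))
        (L (-(ε • ((Matrix.of fun μ ν => K₀ s (X μ) (X ν)) *ᵥ Δ s)))) (Set.Icc 0 τ) s :=
      fun s hs => (L.toContinuousLinearMap.hasFDerivAt.comp_hasDerivWithinAt s
        (hΔ1 s hs).hasDerivWithinAt)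
    have hbd : ∀ s ∈ Set.Icc (0 : ℝ) τ,
        ‖L (-(ε • ((Matrix.of fun μ ν => K₀ s (X μ) (X ν)) *ᵥ Δ s)))‖
          ≤ ε * (k0max * euclNorm (Δ 0)) := by
      intro s hs
      have h1 : ‖L (-(ε • ((Matrix.of fun μ ν => K₀ s (X μ) (X ν)) *ᵥ Δ s)))‖
          = ε * euclNorm ((Matrix.of fun μ ν => K₀ s (X μ) (X ν)) *ᵥ Δ s) := by
        rw [map_neg, norm_neg, _root_.map_smul, norm_smul, Real.norm_eq_abs, abs_of_pos hε]
        congr 1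
        exact (euclNorm_eq _).symm
      rw [h1]
      refine mul_le_mul_of_nonneg_left ?_ hε.le
      calc euclNorm ((Matrix.of fun μ ν => K₀ s (X μ) (X ν)) *ᵥ Δ s)
          ≤ ‖(Matrix.of fun μ ν => K₀ s (X μ) (X ν) : Matrix (Fin P) (Fin P) ℝ)‖
              * euclNorm (Δ s) := euclNorm_mulVec_le _ _
        _ ≤ k0max * euclNorm (Δ 0) :=
            mul_le_mul (hk0max.2 ⟨s, hs, rfl⟩) (hΔnorm s hs) (euclNorm_nonneg _) hk0n
    have := Convex.norm_image_sub_le_of_norm_hasDerivWithin_le hder hbd (convex_Icc 0 τ)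
      (Set.left_mem_Icc.2 hτ) (Set.right_mem_Icc.2 hτ)
    have h2 : ‖L (Δ τ) - L (Δ 0)‖ = euclNorm (Δ τ - Δ 0) := by
      rw [← map_sub, euclNorm_eq]
      rfl
    rw [h2] at this
    simpa [Real.norm_eq_abs, abs_of_nonneg hτ] using this
  -- Step D: solve the ODE after τ
  have hΔτmem : (τ : ℝ) ∈ Set.Icc (0 : ℝ) τ := Set.right_mem_Icc.2 hτ
  have hEconst : ∀ t ≥ τ, NormedSpace.exp (h t • G) *ᵥ Δ t = Δ τ := by
    intro t htτ
    rcases eq_or_lt_of_le htτ with heq | hlt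
    · rw [← heq, hhτ, zero_smul, NormedSpace.exp_zero, one_mulVec]
    have hEd : ∀ s ∈ Set.Ioo τ t,
        HasDerivAt (fun u => NormedSpace.exp (h u • G) *ᵥ Δ u) 0 s := by
      intro s hs
      have hmv := hasDerivAt_mulVec
        (fun i j => hasDerivAt_exp_entry G (hh s hs.1.le) i j) (hΔ2 s hs.1)
      convert hmv using 1
      simp [mulVec_neg, mulVec_smul, mulVec_mulVec, smul_mulVec]
    have hcont : ContinuousOn (fun u => NormedSpace.exp (h u • G) *ᵥ Δ u) (Set.Icc τ t) := by
      intro s hs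
      have hΔd : ∃ d, HasDerivAt Δ d s := by
        rcases eq_or_lt_of_le hs.1 with hsτ | hsτ
        · exact ⟨_, hΔ1 s (hsτ ▸ hΔτmem)⟩
        · exact ⟨_, hΔ2 s hsτ⟩
      obtain ⟨d, hd⟩ := hΔd
      exact (hasDerivAt_mulVec
        (fun i j => hasDerivAt_exp_entry G (hh s hs.1) i j) hd).continuousAt.continuousWithinAt
    funext i
    have hci : ContinuousOn (fun u => (NormedSpace.exp (h u • G) *ᵥ Δ u) i) (Set.Icc τ t) :=
      (continuous_apply i).comp_continuousOn hcont
    have hc0 := const_of_deriv_zero (fun u => (NormedSpace.exp (h u • G) *ᵥ Δ u) i) htτ hci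
      (fun s hs => by simpa using hasDerivAt_pi.1 (hEd s hs) i)
    have h5 : (NormedSpace.exp (h t • G) *ᵥ Δ t) i
        = (NormedSpace.exp (h τ • G) *ᵥ Δ τ) i := hc0
    rw [hhτ, zero_smul, NormedSpace.exp_zero, one_mulVec] at h5
    exact h5
  have hΔt : ∀ t ≥ τ, Δ t = NormedSpace.exp (-(h t) • G) *ᵥ Δ τ := by
    intro t ht
    rw [← hEconst t ht, exp_smul_mulVec_cancel]
  -- Step E: formula for f after τ
  have hform : ∀ t ≥ τ, f t = f τ +
      (av ⬝ᵥ Δ τ - av ⬝ᵥ (NormedSpace.exp (-(h t) • G) *ᵥ Δ τ)) := by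
    intro t htτ
    rcases eq_or_lt_of_le htτ with heq | hlt
    · rw [← heq, hhτ, neg_zero, zero_smul, NormedSpace.exp_zero, one_mulVec]
      ring
    have hFd : ∀ s ∈ Set.Ioo τ t, HasDerivAt (fun u => f u -
        (av ⬝ᵥ Δ τ - av ⬝ᵥ (NormedSpace.exp (-(h u) • G) *ᵥ Δ τ))) 0 s := by
      intro s hs
      have hwd : HasDerivAt (fun u => NormedSpace.exp (-(h u) • G) *ᵥ Δ τ)
          (((-(h' s)) • (NormedSpace.exp (-(h s) • G) * G)) *ᵥ Δ τ) s := by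
        have := hasDerivAt_mulVec
          (fun i j => hasDerivAt_exp_entry G ((hh s hs.1.le).neg) i j)
          (hasDerivAt_const s (Δ τ))
        simpa using this
      have hdw := hasDerivAt_dotProduct_const av hwd
      have hfd := (hf2 s hs.1).sub ((hasDerivAt_const s (av ⬝ᵥ Δ τ)).sub hdw)
      convert hfd using 1
      · rfl
      · rfl
      · rfl
      have hcm : Commute G (NormedSpace.exp (-(h s) • G)) :=
        ((Commute.refl G).smul_right (-(h s))).exp_right
      have hkey : av ⬝ᵥ (((NormedSpace.exp (-(h s) • G)) * G) *ᵥ Δ τ)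
          = kinf ⬝ᵥ Δ s := by
        rw [← hdot]
        rw [mulVec_mulVec, ← hcm.eq, ← Matrix.mul_assoc,
          Matrix.nonsing_inv_mul G hGinv, Matrix.one_mul, ← hΔt s hs.1.le]
      rw [smul_mulVec, neg_smul, dotProduct_neg, dotProduct_smul, hkey]
      simp only [smul_eq_mul]
      ring
    have hcont : ContinuousOn (fun u => f u -
        (av ⬝ᵥ Δ τ - av ⬝ᵥ (NormedSpace.exp (-(h u) • G) *ᵥ Δ τ))) (Set.Icc τ t) := by
      intro s hs
      have hfd : ∃ d, HasDerivAt f d s := by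
        rcases eq_or_lt_of_le hs.1 with hsτ | hsτ
        · exact ⟨_, hf1 s (hsτ ▸ hΔτmem)⟩
        · exact ⟨_, hf2 s hsτ⟩
      obtain ⟨d, hd⟩ := hfd
      have hwd := hasDerivAt_mulVec
        (fun i j => hasDerivAt_exp_entry G ((hh s hs.1).neg) i j)
        (hasDerivAt_const s (Δ τ))
      exact ((hd.sub ((hasDerivAt_const s (av ⬝ᵥ Δ τ)).sub
        (hasDerivAt_dotProduct_const av hwd))).continuousAt).continuousWithinAt
    have hc0 := const_of_deriv_zero _ htτ hcont hFd
    have h6 : f t - (av ⬝ᵥ Δ τ - av ⬝ᵥ (NormedSpace.exp (-(h t) • G) *ᵥ Δ τ))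
        = f τ - (av ⬝ᵥ Δ τ - av ⬝ᵥ (NormedSpace.exp (-(h τ) • G) *ᵥ Δ τ)) := hc0
    rw [hhτ, neg_zero, zero_smul, NormedSpace.exp_zero, one_mulVec] at h6
    linarith [h6]
  -- Step F: the limit
  have hee := fun i j => tendsto_exp_entry hGpsd hGinv hhtop i j
  have h3 : Tendsto (fun t => av ⬝ᵥ (NormedSpace.exp (-(h t) • G) *ᵥ Δ τ))
      atTop (nhds 0) := by
    have hrw : ∀ t, av ⬝ᵥ (NormedSpace.exp (-(h t) • G) *ᵥ Δ τ)
        = ∑ i, ∑ j, av i * (NormedSpace.exp (-(h t) • G) i j * Δ τ j) := by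
      intro t
      simp [dotProduct, mulVec, Finset.mul_sum]
    simp only [hrw]
    have h0 : (0 : ℝ) = ∑ i : Fin P, ∑ j : Fin P, av i * ((0 : ℝ) * Δ τ j) := by simp
    rw [h0]
    exact tendsto_finset_sum _ fun i _ => tendsto_finset_sum _ fun j _ =>
      ((hee i j).mul tendsto_const_nhds).const_mul _
  have hftend : Tendsto f atTop (nhds (f τ + av ⬝ᵥ Δ τ)) := by
    have h4 : Tendsto (fun t => f τ +
        (av ⬝ᵥ Δ τ - av ⬝ᵥ (NormedSpace.exp (-(h t) • G) *ᵥ Δ τ)))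
        atTop (nhds (f τ + (av ⬝ᵥ Δ τ - 0))) :=
      tendsto_const_nhds.add (tendsto_const_nhds.sub h3)
    rw [sub_zero] at h4
    refine h4.congr' ?_
    filter_upwards [eventually_ge_atTop τ] with t ht
    exact (hform t ht).symm
  refine ⟨f τ + av ⬝ᵥ Δ τ, hftend, ?_⟩
  -- Step G: the bound
  have hrw2 : kinf ⬝ᵥ (G⁻¹ *ᵥ (y - f₀)) = av ⬝ᵥ Δ 0 := by rw [hdot, hΔ0]
  have heq : f τ + av ⬝ᵥ Δ τ - f₀x - kinf ⬝ᵥ (G⁻¹ *ᵥ (y - f₀))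
      = (f τ - f 0) + av ⬝ᵥ (Δ τ - Δ 0) := by
    rw [hrw2, ← hf0, dotProduct_sub]
    ring
  rw [heq]
  have habs : |av ⬝ᵥ (Δ τ - Δ 0)| ≤ euclNorm av * (ε * (k0max * euclNorm (Δ 0)) * τ) := by
    calc |av ⬝ᵥ (Δ τ - Δ 0)| ≤ euclNorm av * euclNorm (Δ τ - Δ 0) := abs_dotProduct_le _ _
      _ ≤ euclNorm av * (ε * (k0max * euclNorm (Δ 0)) * τ) :=
          mul_le_mul_of_nonneg_left hΔdiff (euclNorm_nonneg _)
  have htri : |(f τ - f 0) + av ⬝ᵥ (Δ τ - Δ 0)| ≤ |f τ - f 0| + |av ⬝ᵥ (Δ τ - Δ 0)| :=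
    abs_add_le _ _
  have hynorm : euclNorm (y - f₀) = euclNorm (Δ 0) := by rw [hΔ0]
  rw [hynorm]
  have havn : 0 ≤ euclNorm av := euclNorm_nonneg _
  have hΔ0n : 0 ≤ euclNorm (Δ 0) := euclNorm_nonneg _
  nlinarith [hfbound, habs, htri,
    mul_nonneg (mul_nonneg (mul_nonneg (mul_nonneg (mul_nonneg hε.le hτ) hkt0n) hε.le) hτ)
      (mul_nonneg hk0n hΔ0n)]
end

section
/- Consider a deep linear network f(x) = w^{L⊤} W^{L−1} ⋯ W^1 x with weight matrices W^ℓ ∈ ℝ^{N_{ℓ+1}×N_ℓ}, trained by gradient flow on any loss of the form 𝓛 = Σ_μ ℓ(f^μ, y^μ) with ℓ differentiable in its first argument, where f^μ = f(x^μ). Then for every layer ℓ ∈ {1,…,L−1}, the matrix W^ℓ(t) W^ℓ(t)ᵀ − W^{ℓ+1}(t)ᵀ W^{ℓ+1}(t) is conserved: d/dt [ W^ℓ W^{ℓ⊤} − W^{(ℓ+1)⊤} W^{ℓ+1} ] = 0 along the gradient flow. -/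
open Matrix
open scoped Matrix.Norms.L2Operator

namespace DeepLinear

variable (n : ℕ → ℕ) (L : ℕ)

/-- Forward pass (layer-`k` activation) of a deep linear network given by the chain of
matrices `W ℓ : ℝ^{n(ℓ+1) × n(ℓ)}`, `ℓ = 0, …, L-1`. -/
def fwd (W : ∀ ℓ : Fin L, Matrix (Fin (n (ℓ + 1))) (Fin (n ℓ)) ℝ)
    (x : Fin (n 0) → ℝ) : (k : ℕ) → k ≤ L → (Fin (n k) → ℝ)
  | 0, _ => x
  | k + 1, hk => W ⟨k, hk⟩ *ᵥ fwd W x k (Nat.le_of_succ_le hk)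

/-- Auxiliary downward recursion for the backward pass. -/
def bwdAux (W : ∀ ℓ : Fin L, Matrix (Fin (n (ℓ + 1))) (Fin (n ℓ)) ℝ)
    (v : Fin (n L) → ℝ) : (m k : ℕ) → k + m = L → (Fin (n k) → ℝ)
  | 0, k, h => fun i => v (Fin.cast (congrArg n h) i)
  | m + 1, k, h => (W ⟨k, by omega⟩)ᵀ *ᵥ bwdAux W v m (k + 1) (by omega)

/-- Backward pass: `(W^{L-1} ⋯ W^k)ᵀ v`, the gradient of `v ⬝ output` with respect to the
layer-`k` activation. -/
def bwd (W : ∀ ℓ : Fin L, Matrix (Fin (n (ℓ + 1))) (Fin (n ℓ)) ℝ)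
    (v : Fin (n L) → ℝ) (k : ℕ) (hk : k ≤ L) : Fin (n k) → ℝ :=
  bwdAux n L W v (L - k) k (by omega)

/-- Scalar network output (the network has a single output unit, `n L = 1`). -/
def netOut (W : ∀ ℓ : Fin L, Matrix (Fin (n (ℓ + 1))) (Fin (n ℓ)) ℝ)
    (x : Fin (n 0) → ℝ) : ℝ := ∑ i, fwd n L W x L le_rfl i

/-- Gradient of the scalar network output with respect to the layer-`ℓ` weight matrix:
`∂f(x)/∂W^ℓ = (backward vector at layer ℓ+1) (forward activation at layer ℓ)ᵀ`. -/
def netGrad (W : ∀ ℓ : Fin L, Matrix (Fin (n (ℓ + 1))) (Fin (n ℓ)) ℝ)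
    (x : Fin (n 0) → ℝ) (ℓ : Fin L) : Matrix (Fin (n (ℓ + 1))) (Fin (n ℓ)) ℝ :=
  vecMulVec (bwd n L W (fun _ => 1) (ℓ + 1) ℓ.isLt)
    (fwd n L W x ℓ (le_of_lt ℓ.isLt))

end DeepLinear

open DeepLinear

section Aux

variable {a b c : ℕ}

/-- Entry linear map as a continuous linear map. -/
noncomputable def entryCLM (i : Fin a) (j : Fin b) :
    Matrix (Fin a) (Fin b) ℝ →L[ℝ] ℝ :=
  LinearMap.toContinuousLinearMap
    { toFun := fun M => M i j
      map_add' := fun _ _ => rfl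
      map_smul' := fun _ _ => rfl }

lemma hasDerivAt_entry {A : ℝ → Matrix (Fin a) (Fin b) ℝ}
    {A' : Matrix (Fin a) (Fin b) ℝ} {t : ℝ} (h : HasDerivAt A A' t)
    (i : Fin a) (j : Fin b) :
    HasDerivAt (fun s => A s i j) (A' i j) t := by
  have := (entryCLM i j).hasFDerivAt.comp_hasDerivAt t h
  exact this

lemma hasDerivAt_of_entries {A : ℝ → Matrix (Fin a) (Fin b) ℝ}
    {A' : Matrix (Fin a) (Fin b) ℝ} {t : ℝ}
    (h : ∀ i j, HasDerivAt (fun s => A s i j) (A' i j) t) :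
    HasDerivAt A A' t := by
  have h1 : HasDerivAt
      (fun s => ∑ i : Fin a, ∑ j : Fin b, (A s i j) • Matrix.single i j (1 : ℝ))
      (∑ i : Fin a, ∑ j : Fin b, (A' i j) • Matrix.single i j (1 : ℝ)) t := by
    refine HasDerivAt.fun_sum fun i _ => HasDerivAt.fun_sum fun j _ => ?_
    exact (h i j).smul_const _
  have e1 : ∀ (M : Matrix (Fin a) (Fin b) ℝ),
      M = ∑ i : Fin a, ∑ j : Fin b, (M i j) • Matrix.single i j (1 : ℝ) := by
    intro M
    conv_lhs => rw [Matrix.matrix_eq_sum_single M]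
    simp [Matrix.smul_single]
  have hA : A = fun s => ∑ i : Fin a, ∑ j : Fin b,
      (A s i j) • Matrix.single i j (1 : ℝ) := funext fun s => e1 (A s)
  rw [hA, e1 A']
  exact h1

lemma hasDerivAt_matrix_mul {A : ℝ → Matrix (Fin a) (Fin b) ℝ}
    {B : ℝ → Matrix (Fin b) (Fin c) ℝ}
    {A' : Matrix (Fin a) (Fin b) ℝ} {B' : Matrix (Fin b) (Fin c) ℝ} {t : ℝ}
    (hA : HasDerivAt A A' t) (hB : HasDerivAt B B' t) :
    HasDerivAt (fun s => A s * B s) (A' * B t + A t * B') t := by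
  refine hasDerivAt_of_entries fun i j => ?_
  have : ∀ s, (A s * B s) i j = ∑ k, A s i k * B s k j := fun s => Matrix.mul_apply
  simp only [this, Matrix.add_apply, Matrix.mul_apply]
  rw [← Finset.sum_add_distrib]
  exact HasDerivAt.fun_sum fun k _ =>
    (hasDerivAt_entry hA i k).mul (hasDerivAt_entry hB k j)

lemma hasDerivAt_matrix_transpose {A : ℝ → Matrix (Fin a) (Fin b) ℝ}
    {A' : Matrix (Fin a) (Fin b) ℝ} {t : ℝ} (hA : HasDerivAt A A' t) :
    HasDerivAt (fun s => (A s)ᵀ) A'ᵀ t :=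
  hasDerivAt_of_entries fun i j => hasDerivAt_entry hA j i

lemma vecMulVec_mul_transpose (u : Fin a → ℝ) (v : Fin b → ℝ)
    (M : Matrix (Fin c) (Fin b) ℝ) :
    Matrix.vecMulVec u v * Mᵀ = Matrix.vecMulVec u (M *ᵥ v) := by
  ext i j
  simp only [Matrix.mul_apply, Matrix.vecMulVec_apply, Matrix.transpose_apply,
    Matrix.mulVec, dotProduct]
  rw [Finset.mul_sum]
  exact Finset.sum_congr rfl fun k _ => by ring

lemma transpose_mul_vecMulVec (M : Matrix (Fin c) (Fin a) ℝ)
    (u : Fin c → ℝ) (v : Fin b → ℝ) :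
    Mᵀ * Matrix.vecMulVec u v = Matrix.vecMulVec (Mᵀ *ᵥ u) v := by
  ext i j
  simp only [Matrix.mul_apply, Matrix.vecMulVec_apply, Matrix.transpose_apply,
    Matrix.mulVec, dotProduct]
  rw [Finset.sum_mul]
  exact Finset.sum_congr rfl fun k _ => by ring

lemma bwdAux_congr (n : ℕ → ℕ) (L : ℕ)
    (W : ∀ ℓ : Fin L, Matrix (Fin (n (ℓ + 1))) (Fin (n ℓ)) ℝ)
    (v : Fin (n L) → ℝ) (m m' k : ℕ) (hmm : m = m') (h : k + m = L) :
    bwdAux n L W v m k h = bwdAux n L W v m' k (hmm ▸ h) := by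
  subst hmm; rfl

lemma bwd_succ (n : ℕ → ℕ) (L : ℕ)
    (W : ∀ ℓ : Fin L, Matrix (Fin (n (ℓ + 1))) (Fin (n ℓ)) ℝ)
    (v : Fin (n L) → ℝ) (k : ℕ) (hk : k < L) (h1 : k ≤ L) (h2 : k + 1 ≤ L) :
    bwd n L W v k h1 = (W ⟨k, hk⟩)ᵀ *ᵥ bwd n L W v (k + 1) h2 := by
  unfold bwd
  have hmm : L - k = (L - (k + 1)) + 1 := by omega
  rw [bwdAux_congr n L W v _ _ k hmm]
  rfl

end Aux

/-- For a deep linear network `f(x) = w^{L⊤} W^{L-1} ⋯ W^1 x` (encoded as a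
chain of `L` matrices whose last one is the row vector `w^{L⊤}`, i.e. `n L = 1`) trained by
gradient flow on any loss `𝓛 = ∑_μ ℓ(f^μ, y^μ)` with `ℓ` differentiable in its first
argument, the matrix `W^ℓ W^{ℓ⊤} − W^{(ℓ+1)⊤} W^{ℓ+1}` is conserved for every adjacent pair
of layers. -/
theorem stmt8 {L : ℕ} (hL : 0 < L) (n : ℕ → ℕ) (htop : n L = 1)
    {P : ℕ} (x : Fin P → Fin (n 0) → ℝ) (y : Fin P → ℝ)
    (loss dloss : ℝ → ℝ → ℝ)
    (hdl : ∀ z w : ℝ, HasDerivAt (fun u => loss u w) (dloss z w) z)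
    (W : ℝ → ∀ ℓ : Fin L, Matrix (Fin (n (ℓ + 1))) (Fin (n ℓ)) ℝ)
    (hGF : ∀ t (ℓ : Fin L), HasDerivAt (fun t => W t ℓ)
      (-(∑ μ, dloss (netOut n L (W t) (x μ)) (y μ) • netGrad n L (W t) (x μ) ℓ)) t) :
    ∀ (ℓ : ℕ) (hℓ : ℓ + 1 < L) (t : ℝ),
      HasDerivAt (fun t =>
          W t ⟨ℓ, Nat.lt_of_succ_lt hℓ⟩ * (W t ⟨ℓ, Nat.lt_of_succ_lt hℓ⟩)ᵀ
            - (W t ⟨ℓ + 1, hℓ⟩)ᵀ * W t ⟨ℓ + 1, hℓ⟩)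
        (0 : Matrix (Fin (n (ℓ + 1))) (Fin (n (ℓ + 1))) ℝ) t := by
  intro ℓ hℓ t
  set ℓ₁ : Fin L := ⟨ℓ, Nat.lt_of_succ_lt hℓ⟩ with hℓ₁
  set ℓ₂ : Fin L := ⟨ℓ + 1, hℓ⟩ with hℓ₂
  set c : Fin P → ℝ := fun μ => dloss (netOut n L (W t) (x μ)) (y μ) with hc
  set D1 : Matrix (Fin (n (ℓ + 1))) (Fin (n ℓ)) ℝ :=
    -(∑ μ, c μ • netGrad n L (W t) (x μ) ℓ₁) with hD1
  set D2 : Matrix (Fin (n (ℓ + 2))) (Fin (n (ℓ + 1))) ℝ :=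
    -(∑ μ, c μ • netGrad n L (W t) (x μ) ℓ₂) with hD2
  have h1 : HasDerivAt (fun s => W s ℓ₁) D1 t := hGF t ℓ₁
  have h2 : HasDerivAt (fun s => W s ℓ₂) D2 t := hGF t ℓ₂
  have prod1 : HasDerivAt (fun s => W s ℓ₁ * (W s ℓ₁)ᵀ)
      (D1 * (W t ℓ₁)ᵀ + W t ℓ₁ * D1ᵀ) t :=
    hasDerivAt_matrix_mul h1 (hasDerivAt_matrix_transpose h1)
  have prod2 : HasDerivAt (fun s => (W s ℓ₂)ᵀ * W s ℓ₂)
      (D2ᵀ * W t ℓ₂ + (W t ℓ₂)ᵀ * D2) t :=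
    hasDerivAt_matrix_mul (hasDerivAt_matrix_transpose h2) h2
  have key : D1 * (W t ℓ₁)ᵀ = (W t ℓ₂)ᵀ * D2 := by
    rw [hD1, hD2, Matrix.neg_mul, Matrix.mul_neg, Matrix.sum_mul, Matrix.mul_sum]
    congr 1
    refine Finset.sum_congr rfl fun μ _ => ?_
    rw [Matrix.smul_mul, Matrix.mul_smul]
    congr 1
    show Matrix.vecMulVec (bwd n L (W t) (fun _ => 1) (ℓ + 1) ℓ₁.isLt)
        (fwd n L (W t) (x μ) ℓ (le_of_lt ℓ₁.isLt)) * (W t ℓ₁)ᵀ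
      = (W t ℓ₂)ᵀ * Matrix.vecMulVec (bwd n L (W t) (fun _ => 1) (ℓ + 2) ℓ₂.isLt)
        (fwd n L (W t) (x μ) (ℓ + 1) (le_of_lt ℓ₂.isLt))
    rw [vecMulVec_mul_transpose, transpose_mul_vecMulVec]
    have hfwd : W t ℓ₁ *ᵥ fwd n L (W t) (x μ) ℓ (le_of_lt ℓ₁.isLt)
        = fwd n L (W t) (x μ) (ℓ + 1) (le_of_lt ℓ₂.isLt) := rfl
    have hbwd : bwd n L (W t) (fun _ => 1) (ℓ + 1) ℓ₁.isLt
        = (W t ℓ₂)ᵀ *ᵥ bwd n L (W t) (fun _ => 1) (ℓ + 2) ℓ₂.isLt :=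
      bwd_succ n L (W t) (fun _ => 1) (ℓ + 1) hℓ _ _
    rw [hfwd, hbwd]
  have hN : W t ℓ₁ * D1ᵀ = (D1 * (W t ℓ₁)ᵀ)ᵀ := by
    rw [Matrix.transpose_mul, Matrix.transpose_transpose]
  have hP : D2ᵀ * W t ℓ₂ = ((W t ℓ₂)ᵀ * D2)ᵀ := by
    rw [Matrix.transpose_mul, Matrix.transpose_transpose]
  have h0 : (D1 * (W t ℓ₁)ᵀ + W t ℓ₁ * D1ᵀ) - (D2ᵀ * W t ℓ₂ + (W t ℓ₂)ᵀ * D2)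
      = (0 : Matrix (Fin (n (ℓ + 1))) (Fin (n (ℓ + 1))) ℝ) := by
    rw [hN, hP, key]
    abel
  have := prod1.sub prod2
  rwa [h0] at this
end
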